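/- The unique maximizer (ξ_j^{(N)*})_{j=1}^N of T_N is strictly decreasing in j and all its entries are strictly positive: ξ_1^{(N)*} > ξ_2^{(N)*} > … > ξ_N^{(N)*} > 0. -/

import Mathlib

open Real Filter Set

/-- The finite-horizon throughput functional `T_N` (log base 2), evaluated at a
sequence indexed from 1 (only coordinates `1,…,N` matter). -/
noncomputable def TN (B γ p : ℝ) (w N : ℕ) (ξ : ℕ → ℝ) : ℝ :=
  (∑ k ∈ Finset.Icc 1 w, p ^ 2 * (1 - p) ^ (k - 1) * ((k : ℝ) / 2) *
      Real.logb 2 (1 + γ * B / k))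
  + (∑ j ∈ Finset.Icc 1 N, p * (1 - p) ^ (j + w - 1) * (1 / 2) *
      Real.logb 2 (1 + γ * ξ j))
  + (∑ k ∈ Finset.Icc 1 N, p ^ 2 * (1 - p) ^ (k + w - 1) * ((w : ℝ) / 2) *
      Real.logb 2 (1 + (γ / w) * (B - ∑ j ∈ Finset.Icc 1 k, ξ j)))
  + p * (1 - p) ^ (w + N) * ((w : ℝ) / 2) *
      Real.logb 2 (1 + (γ / w) * (B - ∑ j ∈ Finset.Icc 1 N, ξ j))

/-- The admissible simplex `{ξ : ξ_j ≥ 0, ∑_{j=1}^N ξ_j ≤ B}`, as sequences supported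
on coordinates `1,…,N`. -/
def adm (B : ℝ) (N : ℕ) : Set (ℕ → ℝ) :=
  {ξ | (∀ j, 1 ≤ j → j ≤ N → 0 ≤ ξ j) ∧ (∀ j, j = 0 ∨ N < j → ξ j = 0)
      ∧ ∑ j ∈ Finset.Icc 1 N, ξ j ≤ B}

namespace TNP

noncomputable def aa (p : ℝ) (w j : ℕ) : ℝ := p * (1 - p) ^ (j + w - 1) / 2
noncomputable def bb (p : ℝ) (w k : ℕ) : ℝ := p ^ 2 * (1 - p) ^ (k + w - 1) * w / 2
noncomputable def cc (p : ℝ) (w N : ℕ) : ℝ := p * (1 - p) ^ (w + N) * w / 2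
noncomputable def S (k : ℕ) (ξ : ℕ → ℝ) : ℝ := ∑ m ∈ Finset.Icc 1 k, ξ m

noncomputable def F (B γ p : ℝ) (w N : ℕ) (ξ : ℕ → ℝ) : ℝ :=
  (∑ j ∈ Finset.Icc 1 N, aa p w j * Real.log (1 + γ * ξ j))
  + (∑ k ∈ Finset.Icc 1 N, bb p w k * Real.log (1 + (γ / w) * (B - S k ξ)))
  + cc p w N * Real.log (1 + (γ / w) * (B - S N ξ))

variable {B γ p : ℝ} {w N : ℕ}

lemma aa_pos (hp : 0 < p) (hp1 : p < 1) (j : ℕ) : 0 < aa p w j := by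
  have h1p : (0:ℝ) < 1 - p := by linarith
  unfold aa; positivity

lemma bb_pos (hp : 0 < p) (hp1 : p < 1) (hw : 1 ≤ w) (k : ℕ) : 0 < bb p w k := by
  have : (0:ℝ) < w := by exact_mod_cast hw
  have h1p : (0:ℝ) < 1 - p := by linarith
  unfold bb; positivity

lemma cc_pos (hp : 0 < p) (hp1 : p < 1) (hw : 1 ≤ w) : 0 < cc p w N := by
  have : (0:ℝ) < w := by exact_mod_cast hw
  have h1p : (0:ℝ) < 1 - p := by linarith
  unfold cc; positivity

lemma bb_eq (hw : 1 ≤ w) (k : ℕ) : bb p w k = w * (aa p w k - aa p w (k + 1)) := by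
  have h1 : k + 1 + w - 1 = (k + w - 1) + 1 := by omega
  unfold aa bb
  rw [h1, pow_succ]
  ring

lemma cc_eq : cc p w N = (w : ℝ) * aa p w (N + 1) := by
  have h1 : N + 1 + w - 1 = w + N := by omega
  unfold aa cc
  rw [h1]
  ring

lemma tele (hw : 1 ≤ w) (j : ℕ) : ∀ n : ℕ, j ≤ n + 1 →
    ∑ k ∈ Finset.Icc j n, bb p w k = w * (aa p w j - aa p w (n + 1)) := by
  intro n
  induction n with
  | zero => intro hj
            interval_cases j
            · simp [Finset.Icc_self, bb_eq hw]
            · simp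
  | succ n ih =>
      intro hj
      rcases Nat.lt_or_ge j (n + 2) with h | h
      · have hj' : j ≤ n + 1 := by omega
        rw [Finset.sum_Icc_succ_top hj', ih hj', bb_eq hw]
        ring
      · have : j = n + 2 := by omega
        subst this
        simp

lemma TN_eq (hw : 1 ≤ w) :
    ∀ ξ : ℕ → ℝ, TN B γ p w N ξ =
      (∑ k ∈ Finset.Icc 1 w, p ^ 2 * (1 - p) ^ (k - 1) * ((k : ℝ) / 2) *
        Real.logb 2 (1 + γ * B / k)) + F B γ p w N ξ / Real.log 2 := by
  intro ξ
  have h1 : ∑ j ∈ Finset.Icc 1 N, p * (1 - p) ^ (j + w - 1) * (1 / 2) *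
      Real.logb 2 (1 + γ * ξ j)
      = (∑ j ∈ Finset.Icc 1 N, aa p w j * Real.log (1 + γ * ξ j)) / Real.log 2 := by
    rw [Finset.sum_div]
    exact Finset.sum_congr rfl fun j _ => by unfold aa Real.logb; ring
  have h2 : ∑ k ∈ Finset.Icc 1 N, p ^ 2 * (1 - p) ^ (k + w - 1) * ((w : ℝ) / 2) *
      Real.logb 2 (1 + (γ / w) * (B - ∑ j ∈ Finset.Icc 1 k, ξ j))
      = (∑ k ∈ Finset.Icc 1 N, bb p w k * Real.log (1 + (γ / w) * (B - S k ξ))) / Real.log 2 := by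
    rw [Finset.sum_div]
    exact Finset.sum_congr rfl fun k _ => by unfold bb Real.logb S; ring
  have h3 : p * (1 - p) ^ (w + N) * ((w : ℝ) / 2) *
      Real.logb 2 (1 + (γ / w) * (B - ∑ j ∈ Finset.Icc 1 N, ξ j))
      = cc p w N * Real.log (1 + (γ / w) * (B - S N ξ)) / Real.log 2 := by
    unfold cc Real.logb S; ring
  unfold TN F
  rw [h1, h2, h3, add_div, add_div]
  ring




lemma hblock (C u v : ℝ) (hu : 0 < 1 + u) :
    HasDerivAt (fun t : ℝ => C * Real.log (1 + (u + t * v))) (C * (v / (1 + u))) 0 := by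
  have h1 : HasDerivAt (fun t : ℝ => 1 + (u + t * v)) v 0 := by
    have h0 : HasDerivAt (fun t : ℝ => t * v) v 0 := by
      simpa using (hasDerivAt_id (0:ℝ)).mul_const v
    have := h0.const_add (1 + u)
    exact this.congr_of_eventuallyEq (Filter.Eventually.of_forall fun t =>
      (by ring : 1 + (u + t * v) = 1 + u + t * v))
  have h2 : HasDerivAt (fun t : ℝ => Real.log (1 + (u + t * v))) ((1 + u)⁻¹ * v) 0 := by
    have hlog : HasDerivAt Real.log (1 + u)⁻¹ ((fun t : ℝ => 1 + (u + t * v)) 0) := by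
      simpa using Real.hasDerivAt_log hu.ne'
    exact HasDerivAt.comp (0:ℝ) hlog h1
  have := h2.const_mul C
  rw [show C * (v / (1 + u)) = C * ((1 + u)⁻¹ * v) by ring]
  exact this

lemma deriv_nonpos {g : ℝ → ℝ} {G : ℝ} (hg : HasDerivAt g G 0)
    (h : ∀ᶠ t in nhdsWithin (0:ℝ) (Set.Ioi 0), g t ≤ g 0) : G ≤ 0 := by
  by_contra hG
  push_neg at hG
  have hs : Tendsto (slope g 0) (nhdsWithin (0:ℝ) (Set.Ioi 0)) (nhds G) :=
    (hasDerivAt_iff_tendsto_slope.1 hg).mono_left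
      (nhdsWithin_mono _ (fun x hx => by simpa using ne_of_gt (Set.mem_Ioi.1 hx)))
  have h2 : ∀ᶠ t in nhdsWithin (0:ℝ) (Set.Ioi 0), 0 < slope g 0 t :=
    hs.eventually_const_lt hG
  have h3 : ∀ᶠ t in nhdsWithin (0:ℝ) (Set.Ioi 0), (0:ℝ) < t := by
    filter_upwards [self_mem_nhdsWithin] with t ht using Set.mem_Ioi.1 ht
  obtain ⟨t, h1t, h2t, h3t⟩ := (h.and (h2.and h3)).exists
  rw [slope_def_field] at h2t
  have : 0 < g t - g 0 := by
    have := mul_pos h2t (show (0:ℝ) < t - 0 by linarith)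
    rwa [div_mul_cancel₀] at this
    linarith
  linarith



lemma F_hasDeriv (hγ : 0 < γ) (hw : 1 ≤ w) (hN : 1 ≤ N) (ξ d : ℕ → ℝ)
    (hpos1 : ∀ j ∈ Finset.Icc 1 N, 0 < 1 + γ * ξ j)
    (hpos2 : ∀ k ∈ Finset.Icc 1 N, 0 < 1 + (γ / w) * (B - S k ξ)) :
    HasDerivAt (fun t => F B γ p w N (fun m => ξ m + t * d m))
      ((∑ j ∈ Finset.Icc 1 N, aa p w j * (γ * d j / (1 + γ * ξ j)))
       + (∑ k ∈ Finset.Icc 1 N, bb p w k *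
           (-((γ / w) * S k d) / (1 + (γ / w) * (B - S k ξ))))
       + cc p w N * (-((γ / w) * S N d) / (1 + (γ / w) * (B - S N ξ)))) 0 := by
  have hS : ∀ (k : ℕ) (t : ℝ), S k (fun m => ξ m + t * d m) = S k ξ + t * S k d := by
    intro k t
    unfold S
    rw [Finset.sum_add_distrib, Finset.mul_sum]
  have hF : (fun t => F B γ p w N (fun m => ξ m + t * d m)) = fun t =>
      (∑ j ∈ Finset.Icc 1 N, aa p w j * Real.log (1 + (γ * ξ j + t * (γ * d j))))
      + (∑ k ∈ Finset.Icc 1 N, bb p w k *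
          Real.log (1 + ((γ / w) * (B - S k ξ) + t * (-((γ / w) * S k d)))))
      + cc p w N * Real.log (1 + ((γ / w) * (B - S N ξ) + t * (-((γ / w) * S N d)))) := by
    funext t
    unfold F
    congr 1
    · congr 1
      · exact Finset.sum_congr rfl fun j _ => by rw [show 1 + γ * (ξ j + t * d j)
          = 1 + (γ * ξ j + t * (γ * d j)) by ring]
      · exact Finset.sum_congr rfl fun k _ => by rw [hS k t, show 1 + (γ / w) * (B - (S k ξ + t * S k d))
          = 1 + ((γ / w) * (B - S k ξ) + t * (-((γ / w) * S k d))) by ring]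
    · rw [hS N t, show 1 + (γ / w) * (B - (S N ξ + t * S N d))
          = 1 + ((γ / w) * (B - S N ξ) + t * (-((γ / w) * S N d))) by ring]
  rw [hF]
  have h1 : HasDerivAt (fun t : ℝ => ∑ j ∈ Finset.Icc 1 N,
      aa p w j * Real.log (1 + (γ * ξ j + t * (γ * d j))))
      (∑ j ∈ Finset.Icc 1 N, aa p w j * (γ * d j / (1 + γ * ξ j))) 0 :=
    HasDerivAt.fun_sum fun j hj => hblock _ _ _ (hpos1 j hj)
  have h2 : HasDerivAt (fun t : ℝ => ∑ k ∈ Finset.Icc 1 N,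
      bb p w k * Real.log (1 + ((γ / w) * (B - S k ξ) + t * (-((γ / w) * S k d)))))
      (∑ k ∈ Finset.Icc 1 N, bb p w k * (-((γ / w) * S k d) / (1 + (γ / w) * (B - S k ξ)))) 0 :=
    HasDerivAt.fun_sum fun k hk => hblock _ _ _ (hpos2 k hk)
  have h3 : HasDerivAt (fun t : ℝ =>
      cc p w N * Real.log (1 + ((γ / w) * (B - S N ξ) + t * (-((γ / w) * S N d)))))
      (cc p w N * (-((γ / w) * S N d) / (1 + (γ / w) * (B - S N ξ)))) 0 :=
    hblock _ _ _ (hpos2 N (Finset.mem_Icc.2 ⟨hN, le_refl N⟩))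
  exact (h1.add h2).add h3

end TNP

set_option maxHeartbeats 2000000 in
/-- The maximizer of `T_N` is strictly decreasing in `j` and all its entries are
strictly positive: `ξ_1 > ξ_2 > … > ξ_N > 0`. -/
theorem TN_maximizer_strict_decreasing_pos (B γ p : ℝ) (w N : ℕ) (hB : 0 < B)
    (hγ : 0 < γ) (hw : 1 ≤ w) (hp : 0 < p) (hp1 : p < 1) (hN : 1 ≤ N) (ξ : ℕ → ℝ)
    (hξ : ξ ∈ adm B N) (hmax : ∀ η ∈ adm B N, TN B γ p w N η ≤ TN B γ p w N ξ) :
    (∀ j, 1 ≤ j → j < N → ξ (j + 1) < ξ j) ∧ (∀ j, 1 ≤ j → j ≤ N → 0 < ξ j) := by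
  obtain ⟨hξ0, hξz, hξB⟩ := hξ
  have hwR : (1:ℝ) ≤ (w:ℝ) := by exact_mod_cast hw
  have hwpos : (0:ℝ) < w := by linarith
  have hwne : (w:ℝ) ≠ 0 := ne_of_gt hwpos
  have hgw : 0 < γ / (w:ℝ) := div_pos hγ hwpos
  have h1p : (0:ℝ) < 1 - p := by linarith
  have hlog2 : (0:ℝ) < Real.log 2 := Real.log_pos (by norm_num)
  have hFmax : ∀ η ∈ adm B N, TNP.F B γ p w N η ≤ TNP.F B γ p w N ξ := by
    intro η hη
    have h := hmax η hη
    rw [TNP.TN_eq hw, TNP.TN_eq hw] at h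
    have h2 := sub_nonneg.2 h
    rw [show ((∑ k ∈ Finset.Icc 1 w, p ^ 2 * (1 - p) ^ (k - 1) * ((k : ℝ) / 2) *
        Real.logb 2 (1 + γ * B / k)) + TNP.F B γ p w N ξ / Real.log 2)
        - ((∑ k ∈ Finset.Icc 1 w, p ^ 2 * (1 - p) ^ (k - 1) * ((k : ℝ) / 2) *
        Real.logb 2 (1 + γ * B / k)) + TNP.F B γ p w N η / Real.log 2)
        = (TNP.F B γ p w N ξ - TNP.F B γ p w N η) / Real.log 2 by ring] at h2
    rcases div_nonneg_iff.1 h2 with ⟨h4, _⟩ | ⟨_, h5⟩ <;> linarith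
  have hξnn : ∀ j ∈ Finset.Icc 1 N, 0 ≤ ξ j := fun j hj =>
    hξ0 j (Finset.mem_Icc.1 hj).1 (Finset.mem_Icc.1 hj).2
  have hpos1 : ∀ j ∈ Finset.Icc 1 N, 0 < 1 + γ * ξ j := fun j hj => by
    nlinarith [hξnn j hj]
  have hSle : ∀ k, 1 ≤ k → k ≤ N → TNP.S k ξ ≤ B := by
    intro k h1 h2
    refine le_trans ?_ hξB
    exact Finset.sum_le_sum_of_subset_of_nonneg (Finset.Icc_subset_Icc le_rfl h2)
      (fun m hm _ => hξnn m hm)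
  have hub : ∀ k, 1 ≤ k → k ≤ N → 0 ≤ (γ / ↑w) * (B - TNP.S k ξ) := fun k h1 h2 =>
    mul_nonneg hgw.le (by linarith [hSle k h1 h2])
  have hpos2 : ∀ k ∈ Finset.Icc 1 N, 0 < 1 + (γ / ↑w) * (B - TNP.S k ξ) := fun k hk => by
    have := hub k (Finset.mem_Icc.1 hk).1 (Finset.mem_Icc.1 hk).2
    linarith
  have key : ∀ d : ℕ → ℝ,
      (∀ᶠ t in nhdsWithin (0:ℝ) (Set.Ioi 0), (fun m => ξ m + t * d m) ∈ adm B N) →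
      (∑ j ∈ Finset.Icc 1 N, TNP.aa p w j * (γ * d j / (1 + γ * ξ j)))
      + (∑ k ∈ Finset.Icc 1 N, TNP.bb p w k *
          (-((γ / ↑w) * TNP.S k d) / (1 + (γ / ↑w) * (B - TNP.S k ξ))))
      + TNP.cc p w N * (-((γ / ↑w) * TNP.S N d) / (1 + (γ / ↑w) * (B - TNP.S N ξ))) ≤ 0 := by
    intro d hadm
    refine TNP.deriv_nonpos (TNP.F_hasDeriv hγ hw hN ξ d hpos1 hpos2) ?_
    filter_upwards [hadm] with t ht
    have h0 : (fun m => ξ m + (0:ℝ) * d m) = ξ := by funext m; simp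
    rw [h0]
    exact hFmax _ ht
  have evadm : ∀ (d : ℕ → ℝ) (δ : ℝ), 0 < δ →
      (∀ t : ℝ, 0 < t → t < δ → (fun m => ξ m + t * d m) ∈ adm B N) →
      (∀ᶠ t in nhdsWithin (0:ℝ) (Set.Ioi 0), (fun m => ξ m + t * d m) ∈ adm B N) := by
    intro d δ hδ h
    filter_upwards [Ioo_mem_nhdsGT_of_mem (Set.mem_Ico.2 ⟨le_refl (0:ℝ), hδ⟩)] with t ht
    exact h t ht.1 ht.2
  have hSind : ∀ i k : ℕ, 1 ≤ i →
      TNP.S k (fun m => if m = i then (1:ℝ) else 0) = if i ≤ k then 1 else 0 := by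
    intro i k hi
    unfold TNP.S
    rw [Finset.sum_ite_eq' (Finset.Icc 1 k) i (fun _ => (1:ℝ))]
    simp [Finset.mem_Icc, hi]
  have hsum1 : ∀ i, 1 ≤ i → i ≤ N →
      (∑ j ∈ Finset.Icc 1 N, TNP.aa p w j * (γ * (if j = i then (1:ℝ) else 0) / (1 + γ * ξ j)))
        = TNP.aa p w i * (γ / (1 + γ * ξ i)) := by
    intro i h1 h2
    rw [Finset.sum_eq_single i]
    · simp
    · intro b _ hb; simp [hb]
    · intro h; exact absurd (Finset.mem_Icc.2 ⟨h1, h2⟩) h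
  have hmul : ∀ X : ℝ, (γ / ↑w) * (↑w * X) = γ * X := by
    intro X; field_simp
  have pairG : ∀ iA iB : ℕ, 1 ≤ iA → iA ≤ N → 1 ≤ iB → iB ≤ N → iA ≠ iB → 0 < ξ iB →
      TNP.aa p w iA * (γ / (1 + γ * ξ iA)) - TNP.aa p w iB * (γ / (1 + γ * ξ iB))
      + (∑ k ∈ Finset.Icc 1 N, TNP.bb p w k *
          (-((γ / ↑w) * ((if iA ≤ k then (1:ℝ) else 0) - (if iB ≤ k then (1:ℝ) else 0)))
            / (1 + (γ / ↑w) * (B - TNP.S k ξ)))) ≤ 0 := by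
    intro iA iB h1A h2A h1B h2B hne hposB
    set d : ℕ → ℝ := fun m => (if m = iA then (1:ℝ) else 0) - (if m = iB then (1:ℝ) else 0) with hd
    have hSd : ∀ k, TNP.S k d = (if iA ≤ k then (1:ℝ) else 0) - (if iB ≤ k then (1:ℝ) else 0) := by
      intro k
      have : TNP.S k d = TNP.S k (fun m => if m = iA then (1:ℝ) else 0)
          - TNP.S k (fun m => if m = iB then (1:ℝ) else 0) := by
        unfold TNP.S
        rw [← Finset.sum_sub_distrib]
      rw [this, hSind iA k h1A, hSind iB k h1B]
    have hadm : ∀ t : ℝ, 0 < t → t < ξ iB → (fun m => ξ m + t * d m) ∈ adm B N := by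
      intro t ht1 ht2
      refine ⟨?_, ?_, ?_⟩
      · intro m hm1 hm2
        have := hξ0 m hm1 hm2
        simp only [hd]
        rcases eq_or_ne m iA with h | h
        · subst h
          rw [if_pos rfl, if_neg hne]
          linarith
        · rw [if_neg h]
          rcases eq_or_ne m iB with h' | h'
          · subst h'
            rw [if_pos rfl]
            linarith
          · rw [if_neg h']
            simpa using this
      · intro m hm
        have hmA : m ≠ iA := by rcases hm with h | h <;> omega
        have hmB : m ≠ iB := by rcases hm with h | h <;> omega
        simp only [hd]
        rw [if_neg hmA, if_neg hmB, hξz m hm]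
        ring
      · have : (∑ m ∈ Finset.Icc 1 N, (ξ m + t * d m)) = TNP.S N ξ + t * TNP.S N d := by
          unfold TNP.S
          rw [Finset.sum_add_distrib, Finset.mul_sum]
        rw [this, hSd N, if_pos h2A, if_pos h2B]
        unfold TNP.S
        simpa using hξB
    have hkey := key d (evadm d (ξ iB) hposB hadm)
    have e1 : (∑ j ∈ Finset.Icc 1 N, TNP.aa p w j * (γ * d j / (1 + γ * ξ j)))
        = TNP.aa p w iA * (γ / (1 + γ * ξ iA)) - TNP.aa p w iB * (γ / (1 + γ * ξ iB)) := by
      have : ∀ j ∈ Finset.Icc 1 N, TNP.aa p w j * (γ * d j / (1 + γ * ξ j))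
          = TNP.aa p w j * (γ * (if j = iA then (1:ℝ) else 0) / (1 + γ * ξ j))
            - TNP.aa p w j * (γ * (if j = iB then (1:ℝ) else 0) / (1 + γ * ξ j)) := by
        intro j _
        simp only [hd]
        ring
      rw [Finset.sum_congr rfl this, Finset.sum_sub_distrib, hsum1 iA h1A h2A, hsum1 iB h1B h2B]
    have e3 : TNP.cc p w N * (-((γ / ↑w) * TNP.S N d) / (1 + (γ / ↑w) * (B - TNP.S N ξ))) = 0 := by
      rw [hSd N, if_pos h2A, if_pos h2B]
      simp
    rw [e1, e3] at hkey
    rw [show ∀ x:ℝ, x + 0 = x from fun x => add_zero x] at hkey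
    calc TNP.aa p w iA * (γ / (1 + γ * ξ iA)) - TNP.aa p w iB * (γ / (1 + γ * ξ iB))
        + (∑ k ∈ Finset.Icc 1 N, TNP.bb p w k *
          (-((γ / ↑w) * ((if iA ≤ k then (1:ℝ) else 0) - (if iB ≤ k then (1:ℝ) else 0)))
            / (1 + (γ / ↑w) * (B - TNP.S k ξ))))
        = TNP.aa p w iA * (γ / (1 + γ * ξ iA)) - TNP.aa p w iB * (γ / (1 + γ * ξ iB))
        + (∑ k ∈ Finset.Icc 1 N, TNP.bb p w k *
          (-((γ / ↑w) * TNP.S k d) / (1 + (γ / ↑w) * (B - TNP.S k ξ)))) := by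
          congr 1
          exact Finset.sum_congr rfl fun k _ => by rw [hSd k]
      _ ≤ 0 := hkey
  have haa : ∀ n : ℕ, 0 < TNP.aa p w n := TNP.aa_pos hp hp1
  have hbb : ∀ n : ℕ, 0 < TNP.bb p w n := TNP.bb_pos hp hp1 hw
  have hccp : 0 < TNP.cc p w N := TNP.cc_pos hp hp1 hw
  have hpos : ∀ j, 1 ≤ j → j ≤ N → 0 < ξ j := by
    intro j hj1 hjN
    by_contra hcon
    push_neg at hcon
    have hj0 : ξ j = 0 := le_antisymm hcon (hξ0 j hj1 hjN)
    rcases lt_or_eq_of_le (hSle N hN le_rfl) with hlt | heqB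
    · -- Case A : budget not exhausted; push mass into coordinate j
      set d : ℕ → ℝ := fun m => if m = j then (1:ℝ) else 0 with hd
      have hadm : ∀ t : ℝ, 0 < t → t < B - TNP.S N ξ → (fun m => ξ m + t * d m) ∈ adm B N := by
        intro t ht1 ht2
        refine ⟨?_, ?_, ?_⟩
        · intro m hm1 hm2
          have := hξ0 m hm1 hm2
          simp only [hd]
          split_ifs <;> linarith
        · intro m hm
          have hmj : m ≠ j := by rcases hm with h | h <;> omega
          simp only [hd]
          rw [if_neg hmj, hξz m hm]
          ring
        · have : (∑ m ∈ Finset.Icc 1 N, (ξ m + t * d m)) = TNP.S N ξ + t * TNP.S N d := by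
            unfold TNP.S
            rw [Finset.sum_add_distrib, Finset.mul_sum]
          rw [this]
          simp only [hd]
          rw [hSind j N hj1, if_pos hjN]
          linarith
      have hkey := key d (evadm d _ (by linarith) hadm)
      have eS : ∀ k, TNP.S k d = if j ≤ k then (1:ℝ) else 0 := by
        intro k; simp only [hd]; exact hSind j k hj1
      simp only [hd] at hkey
      rw [hsum1 j hj1 hjN] at hkey
      simp only [← hd, eS] at hkey
      rw [if_pos hjN] at hkey
      have hT1 : TNP.aa p w j * (γ / (1 + γ * ξ j)) = γ * TNP.aa p w j := by
        rw [hj0, mul_zero, add_zero, div_one]; ring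
      have hite : ∑ k ∈ Finset.Icc 1 N, (if j ≤ k then TNP.bb p w k else 0)
          = ↑w * (TNP.aa p w j - TNP.aa p w (N+1)) := by
        have hfil : (Finset.Icc 1 N).filter (fun k => j ≤ k) = Finset.Icc j N := by
          ext x; simp [Finset.mem_Icc, Finset.mem_filter]; omega
        rw [← Finset.sum_filter, hfil, TNP.tele hw j N (by omega)]
      have hSum_lb : -(γ * (TNP.aa p w j - TNP.aa p w (N+1)))
          ≤ ∑ k ∈ Finset.Icc 1 N, TNP.bb p w k *
              (-((γ / ↑w) * (if j ≤ k then (1:ℝ) else 0)) / (1 + (γ / ↑w) * (B - TNP.S k ξ))) := by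
        have hterm : ∀ k ∈ Finset.Icc 1 N,
            -((γ / ↑w) * (if j ≤ k then TNP.bb p w k else 0))
            ≤ TNP.bb p w k *
              (-((γ / ↑w) * (if j ≤ k then (1:ℝ) else 0)) / (1 + (γ / ↑w) * (B - TNP.S k ξ))) := by
          intro k hk
          by_cases h : j ≤ k
          · rw [if_pos h, if_pos h]
            have hp2 := hpos2 k hk
            have hu := hub k (Finset.mem_Icc.1 hk).1 (Finset.mem_Icc.1 hk).2
            have hbk := hbb k
            have h1 : (γ / ↑w) * TNP.bb p w k / (1 + (γ / ↑w) * (B - TNP.S k ξ))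
                ≤ (γ / ↑w) * TNP.bb p w k := div_le_self (by positivity) (by linarith)
            have h2 : TNP.bb p w k *
                (-((γ / ↑w) * (1:ℝ)) / (1 + (γ / ↑w) * (B - TNP.S k ξ)))
                = -((γ / ↑w) * TNP.bb p w k / (1 + (γ / ↑w) * (B - TNP.S k ξ))) := by ring
            linarith
          · rw [if_neg h, if_neg h]; simp
        have h3 := Finset.sum_le_sum hterm
        calc -(γ * (TNP.aa p w j - TNP.aa p w (N+1)))
            = ∑ k ∈ Finset.Icc 1 N, -((γ / ↑w) * (if j ≤ k then TNP.bb p w k else 0)) := by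
              rw [Finset.sum_neg_distrib, ← Finset.mul_sum, hite, hmul]
          _ ≤ _ := h3
      have hcc_lb : -(γ * TNP.aa p w (N+1))
          < TNP.cc p w N * (-((γ / ↑w) * (1:ℝ)) / (1 + (γ / ↑w) * (B - TNP.S N ξ))) := by
        have huN : 0 < (γ / ↑w) * (B - TNP.S N ξ) := mul_pos hgw (by linarith)
        have h1 : (γ / ↑w) * TNP.cc p w N / (1 + (γ / ↑w) * (B - TNP.S N ξ))
            < (γ / ↑w) * TNP.cc p w N := div_lt_self (by positivity) (by linarith)
        have h2 : TNP.cc p w N * (-((γ / ↑w) * (1:ℝ)) / (1 + (γ / ↑w) * (B - TNP.S N ξ)))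
            = -((γ / ↑w) * TNP.cc p w N / (1 + (γ / ↑w) * (B - TNP.S N ξ))) := by ring
        have h3 : (γ / ↑w) * TNP.cc p w N = γ * TNP.aa p w (N+1) := by
          rw [TNP.cc_eq, hmul]
        linarith
      rw [hT1] at hkey
      linarith
    · -- Case B : budget exhausted
      set T := (Finset.Icc 1 N).filter (fun m => 0 < ξ m) with hT
      have hTne : T.Nonempty := by
        rw [Finset.filter_nonempty_iff]
        by_contra hTe
        push_neg at hTe
        have h0 : TNP.S N ξ = 0 := Finset.sum_eq_zero (fun m hm =>
          le_antisymm (hTe m hm) (hξnn m hm))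
        rw [heqB] at h0
        linarith
      set i := T.max' hTne with hi
      have hiT : i ∈ T := T.max'_mem hTne
      rw [hT, Finset.mem_filter, Finset.mem_Icc] at hiT
      obtain ⟨⟨hi1, hiN⟩, hξi⟩ := hiT
      have himax : ∀ m, 1 ≤ m → m ≤ N → 0 < ξ m → m ≤ i := fun m h1 h2 h3 =>
        T.le_max' m (by rw [hT, Finset.mem_filter, Finset.mem_Icc]; exact ⟨⟨h1, h2⟩, h3⟩)
      have hij : j ≠ i := by
        intro h
        rw [← h, hj0] at hξi
        exact lt_irrefl 0 hξi
      have hA : TNP.aa p w j * (γ / (1 + γ * ξ j)) = γ * TNP.aa p w j := by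
        rw [hj0, mul_zero, add_zero, div_one]; ring
      have hAi : TNP.aa p w i * (γ / (1 + γ * ξ i)) < γ * TNP.aa p w i := by
        have h1 : γ / (1 + γ * ξ i) < γ := div_lt_self hγ (by nlinarith)
        have := mul_lt_mul_of_pos_left h1 (haa i)
        linarith [this]
      rcases lt_or_gt_of_ne hij with hji | hji
      · -- j < i
        have hpair := pairG j i hj1 hjN hi1 hiN (by omega) hξi
        have hite2 : ∑ k ∈ Finset.Icc 1 N, (if j ≤ k ∧ k < i then TNP.bb p w k else 0)
            = ↑w * (TNP.aa p w j - TNP.aa p w i) := by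
          have hfil : (Finset.Icc 1 N).filter (fun k => j ≤ k ∧ k < i) = Finset.Icc j (i-1) := by
            ext x; simp [Finset.mem_Icc, Finset.mem_filter]; omega
          rw [← Finset.sum_filter, hfil, TNP.tele hw j (i-1) (by omega),
            show i - 1 + 1 = i by omega]
        have hSum_lb : -(γ * (TNP.aa p w j - TNP.aa p w i))
            ≤ ∑ k ∈ Finset.Icc 1 N, TNP.bb p w k *
              (-((γ / ↑w) * ((if j ≤ k then (1:ℝ) else 0) - (if i ≤ k then (1:ℝ) else 0)))
                / (1 + (γ / ↑w) * (B - TNP.S k ξ))) := by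
          have hterm : ∀ k ∈ Finset.Icc 1 N,
              -((γ / ↑w) * (if j ≤ k ∧ k < i then TNP.bb p w k else 0))
              ≤ TNP.bb p w k *
                (-((γ / ↑w) * ((if j ≤ k then (1:ℝ) else 0) - (if i ≤ k then (1:ℝ) else 0)))
                  / (1 + (γ / ↑w) * (B - TNP.S k ξ))) := by
            intro k hk
            by_cases h1 : i ≤ k
            · rw [if_pos (by omega : j ≤ k), if_pos h1, if_neg (by omega : ¬(j ≤ k ∧ k < i))]
              simp
            · by_cases h2 : j ≤ k
              · rw [if_pos h2, if_neg h1, if_pos (⟨h2, by omega⟩ : j ≤ k ∧ k < i)]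
                have hp2 := hpos2 k hk
                have hu := hub k (Finset.mem_Icc.1 hk).1 (Finset.mem_Icc.1 hk).2
                have hbk := hbb k
                have hle : (γ / ↑w) * TNP.bb p w k / (1 + (γ / ↑w) * (B - TNP.S k ξ))
                    ≤ (γ / ↑w) * TNP.bb p w k := div_le_self (by positivity) (by linarith)
                have heq : TNP.bb p w k *
                    (-((γ / ↑w) * ((1:ℝ) - 0)) / (1 + (γ / ↑w) * (B - TNP.S k ξ)))
                    = -((γ / ↑w) * TNP.bb p w k / (1 + (γ / ↑w) * (B - TNP.S k ξ))) := by ring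
                linarith
              · rw [if_neg h2, if_neg h1, if_neg (by omega : ¬(j ≤ k ∧ k < i))]
                simp
          have h3 := Finset.sum_le_sum hterm
          calc -(γ * (TNP.aa p w j - TNP.aa p w i))
              = ∑ k ∈ Finset.Icc 1 N, -((γ / ↑w) * (if j ≤ k ∧ k < i then TNP.bb p w k else 0)) := by
                rw [Finset.sum_neg_distrib, ← Finset.mul_sum, hite2, hmul]
            _ ≤ _ := h3
        rw [hA] at hpair
        linarith
      · -- i < j
        have hzero : ∀ m, i < m → m ≤ N → ξ m = 0 := by
          intro m h1 h2
          by_contra hz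
          have hz' : 0 < ξ m := lt_of_le_of_ne (hξ0 m (by omega) h2) (Ne.symm hz)
          have := himax m (by omega) h2 hz'
          omega
        have hSkB : ∀ k, i ≤ k → k ≤ N → TNP.S k ξ = B := by
          intro k hk1 hk2
          have hsplit : TNP.S k ξ + (∑ m ∈ Finset.Icc (k+1) N, ξ m) = TNP.S N ξ := by
            unfold TNP.S
            rw [← Finset.Ico_add_one_right_eq_Icc, ← Finset.Ico_add_one_right_eq_Icc, ← Finset.Ico_add_one_right_eq_Icc]
            exact Finset.sum_Ico_consecutive _ (by omega) (by omega)
          have htail : (∑ m ∈ Finset.Icc (k+1) N, ξ m) = 0 :=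
            Finset.sum_eq_zero (fun m hm => hzero m
              (by have := (Finset.mem_Icc.1 hm).1; omega)
              ((Finset.mem_Icc.1 hm).2))
          rw [htail, add_zero, heqB] at hsplit
          exact hsplit
        have hpair := pairG j i hj1 hjN hi1 hiN (by omega) hξi
        have hterm : ∀ k ∈ Finset.Icc 1 N,
            TNP.bb p w k *
              (-((γ / ↑w) * ((if j ≤ k then (1:ℝ) else 0) - (if i ≤ k then (1:ℝ) else 0)))
                / (1 + (γ / ↑w) * (B - TNP.S k ξ)))
            = (if i ≤ k ∧ k < j then (γ / ↑w) * TNP.bb p w k else 0) := by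
          intro k hk
          by_cases h1 : j ≤ k
          · rw [if_pos h1, if_pos (by omega : i ≤ k), if_neg (by omega : ¬(i ≤ k ∧ k < j))]
            simp
          · by_cases h2 : i ≤ k
            · rw [if_neg h1, if_pos h2, if_pos (⟨h2, by omega⟩ : i ≤ k ∧ k < j),
                hSkB k h2 (Finset.mem_Icc.1 hk).2, sub_self, mul_zero, add_zero]
              ring
            · rw [if_neg h1, if_neg h2, if_neg (by omega : ¬(i ≤ k ∧ k < j))]
              simp
        have hSum_eq : ∑ k ∈ Finset.Icc 1 N, TNP.bb p w k *
              (-((γ / ↑w) * ((if j ≤ k then (1:ℝ) else 0) - (if i ≤ k then (1:ℝ) else 0)))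
                / (1 + (γ / ↑w) * (B - TNP.S k ξ)))
            = γ * (TNP.aa p w i - TNP.aa p w j) := by
          rw [Finset.sum_congr rfl hterm]
          have hfil : (Finset.Icc 1 N).filter (fun k => i ≤ k ∧ k < j) = Finset.Icc i (j-1) := by
            ext x; simp [Finset.mem_Icc, Finset.mem_filter]; omega
          rw [← Finset.sum_filter, hfil, ← Finset.mul_sum,
            TNP.tele hw i (j-1) (by omega), show j - 1 + 1 = j by omega, hmul]
        rw [hA, hSum_eq] at hpair
        linarith
  -- Step R(N) : the marginal water level at N
  have hRN : γ * ξ N ≤ (γ / ↑w) * (B - TNP.S N ξ) := by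
    have hξN : 0 < ξ N := hpos N hN le_rfl
    set d : ℕ → ℝ := fun m => -(if m = N then (1:ℝ) else 0) with hd
    have hadm : ∀ t : ℝ, 0 < t → t < ξ N → (fun m => ξ m + t * d m) ∈ adm B N := by
      intro t ht1 ht2
      refine ⟨?_, ?_, ?_⟩
      · intro m hm1 hm2
        have := hξ0 m hm1 hm2
        simp only [hd]
        split_ifs with h
        · subst h; simp; linarith
        · simp; linarith
      · intro m hm
        have hmN : m ≠ N := by rcases hm with h | h <;> omega
        simp only [hd]
        rw [if_neg hmN, hξz m hm]
        ring
      · have heq : (∑ m ∈ Finset.Icc 1 N, (ξ m + t * d m)) = TNP.S N ξ + t * TNP.S N d := by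
          unfold TNP.S
          rw [Finset.sum_add_distrib, Finset.mul_sum]
        rw [heq]
        have hSd : TNP.S N d = -1 := by
          have h' : TNP.S N d = -(TNP.S N (fun m => if m = N then (1:ℝ) else 0)) := by
            simp only [hd]
            unfold TNP.S
            exact Finset.sum_neg_distrib _
          rw [h', hSind N N hN, if_pos le_rfl]
        rw [hSd]
        have := hSle N hN le_rfl
        linarith
    have hkey := key d (evadm d _ hξN hadm)
    have hSd : ∀ k, TNP.S k d = -(if N ≤ k then (1:ℝ) else 0) := by
      intro k
      have h' : TNP.S k d = -(TNP.S k (fun m => if m = N then (1:ℝ) else 0)) := by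
        simp only [hd]
        unfold TNP.S
        exact Finset.sum_neg_distrib _
      rw [h', hSind N k hN]
    have e1 : (∑ m ∈ Finset.Icc 1 N, TNP.aa p w m * (γ * d m / (1 + γ * ξ m)))
        = -(TNP.aa p w N * (γ / (1 + γ * ξ N))) := by
      have h1 : ∀ m ∈ Finset.Icc 1 N, TNP.aa p w m * (γ * d m / (1 + γ * ξ m))
          = -(TNP.aa p w m * (γ * (if m = N then (1:ℝ) else 0) / (1 + γ * ξ m))) := by
        intro m _
        simp only [hd]
        ring
      rw [Finset.sum_congr rfl h1, Finset.sum_neg_distrib, hsum1 N hN le_rfl]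
    have e2 : (∑ k ∈ Finset.Icc 1 N, TNP.bb p w k *
          (-((γ / ↑w) * TNP.S k d) / (1 + (γ / ↑w) * (B - TNP.S k ξ))))
        = TNP.bb p w N * ((γ / ↑w) / (1 + (γ / ↑w) * (B - TNP.S N ξ))) := by
      rw [Finset.sum_eq_single N]
      · rw [hSd N, if_pos le_rfl]
        ring
      · intro b hb hbN
        rw [hSd b, if_neg (by have := (Finset.mem_Icc.1 hb).2; omega)]
        simp
      · intro h
        exact absurd (Finset.mem_Icc.2 ⟨hN, le_rfl⟩) h
    have e3 : TNP.cc p w N * (-((γ / ↑w) * TNP.S N d) / (1 + (γ / ↑w) * (B - TNP.S N ξ)))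
        = TNP.cc p w N * ((γ / ↑w) / (1 + (γ / ↑w) * (B - TNP.S N ξ))) := by
      rw [hSd N, if_pos le_rfl]
      ring
    rw [e1, e2, e3] at hkey
    have hbc : TNP.bb p w N + TNP.cc p w N = ↑w * TNP.aa p w N := by
      rw [TNP.bb_eq hw, TNP.cc_eq]
      ring
    have hZ := hpos2 N (Finset.mem_Icc.2 ⟨hN, le_rfl⟩)
    have hX := hpos1 N (Finset.mem_Icc.2 ⟨hN, le_rfl⟩)
    have hcomb : TNP.aa p w N * (γ / (1 + (γ / ↑w) * (B - TNP.S N ξ)))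
        ≤ TNP.aa p w N * (γ / (1 + γ * ξ N)) := by
      have hfl : TNP.bb p w N * ((γ / ↑w) / (1 + (γ / ↑w) * (B - TNP.S N ξ)))
          + TNP.cc p w N * ((γ / ↑w) / (1 + (γ / ↑w) * (B - TNP.S N ξ)))
          = TNP.aa p w N * (γ / (1 + (γ / ↑w) * (B - TNP.S N ξ))) := by
        have : (TNP.bb p w N + TNP.cc p w N) * ((γ / ↑w) / (1 + (γ / ↑w) * (B - TNP.S N ξ)))
            = TNP.aa p w N * (γ / (1 + (γ / ↑w) * (B - TNP.S N ξ))) := by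
          rw [hbc]
          field_simp
        linarith [this]
      linarith
    have hdiv : γ / (1 + (γ / ↑w) * (B - TNP.S N ξ)) ≤ γ / (1 + γ * ξ N) := by
      by_contra h
      push_neg at h
      nlinarith [mul_lt_mul_of_pos_left h (haa N)]
    have := (div_le_div_iff₀ hZ hX).1 hdiv
    nlinarith
  -- Step E_j : first-order equalities for adjacent coordinates
  have hEj : ∀ j, 1 ≤ j → j < N →
      TNP.aa p w j * (γ / (1 + γ * ξ j)) - TNP.aa p w (j+1) * (γ / (1 + γ * ξ (j+1)))
      = γ * (TNP.aa p w j - TNP.aa p w (j+1)) / (1 + (γ / ↑w) * (B - TNP.S j ξ)) := by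
    intro j hj1 hjN
    have hp1j := pairG j (j+1) hj1 (by omega) (by omega) (by omega) (by omega)
      (hpos (j+1) (by omega) (by omega))
    have hp2j := pairG (j+1) j (by omega) (by omega) hj1 (by omega) (by omega)
      (hpos j hj1 (by omega))
    have hbj : (γ / ↑w) * TNP.bb p w j = γ * (TNP.aa p w j - TNP.aa p w (j+1)) := by
      rw [TNP.bb_eq hw, hmul]
    have hm1 : ∑ k ∈ Finset.Icc 1 N, TNP.bb p w k *
          (-((γ / ↑w) * ((if j ≤ k then (1:ℝ) else 0) - (if j+1 ≤ k then (1:ℝ) else 0)))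
            / (1 + (γ / ↑w) * (B - TNP.S k ξ)))
        = -(γ * (TNP.aa p w j - TNP.aa p w (j+1)) / (1 + (γ / ↑w) * (B - TNP.S j ξ))) := by
      rw [Finset.sum_eq_single j]
      · rw [if_pos le_rfl, if_neg (by omega)]
        rw [show -((γ / ↑w) * ((1:ℝ) - 0)) = -((γ / ↑w) * 1) by ring]
        rw [show TNP.bb p w j * (-((γ / ↑w) * (1:ℝ)) / (1 + (γ / ↑w) * (B - TNP.S j ξ)))
          = -((γ / ↑w) * TNP.bb p w j / (1 + (γ / ↑w) * (B - TNP.S j ξ))) by ring, hbj]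
      · intro b _ hbj'
        by_cases hb : j ≤ b
        · rw [if_pos hb, if_pos (by omega)]
          simp
        · rw [if_neg hb, if_neg (by omega)]
          simp
      · intro h
        exact absurd (Finset.mem_Icc.2 ⟨hj1, by omega⟩) h
    have hm2 : ∑ k ∈ Finset.Icc 1 N, TNP.bb p w k *
          (-((γ / ↑w) * ((if j+1 ≤ k then (1:ℝ) else 0) - (if j ≤ k then (1:ℝ) else 0)))
            / (1 + (γ / ↑w) * (B - TNP.S k ξ)))
        = γ * (TNP.aa p w j - TNP.aa p w (j+1)) / (1 + (γ / ↑w) * (B - TNP.S j ξ)) := by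
      rw [Finset.sum_eq_single j]
      · rw [if_pos le_rfl, if_neg (by omega)]
        rw [show -((γ / ↑w) * ((0:ℝ) - 1)) = (γ / ↑w) * 1 by ring]
        rw [show TNP.bb p w j * ((γ / ↑w) * (1:ℝ) / (1 + (γ / ↑w) * (B - TNP.S j ξ)))
          = (γ / ↑w) * TNP.bb p w j / (1 + (γ / ↑w) * (B - TNP.S j ξ)) by ring, hbj]
      · intro b _ hbj'
        by_cases hb : j ≤ b
        · rw [if_pos hb, if_pos (by omega)]
          simp
        · rw [if_neg hb, if_neg (by omega)]
          simp
      · intro h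
        exact absurd (Finset.mem_Icc.2 ⟨hj1, by omega⟩) h
    rw [hm1] at hp1j
    rw [hm2] at hp2j
    linarith
  -- Step: the inductive descent
  have hstep : ∀ j, 1 ≤ j → j < N →
      γ * ξ (j+1) ≤ (γ / ↑w) * (B - TNP.S (j+1) ξ) →
      ξ (j+1) < ξ j ∧ γ * ξ j ≤ (γ / ↑w) * (B - TNP.S j ξ) := by
    intro j hj1 hjN hR
    have hSsucc : TNP.S (j+1) ξ = TNP.S j ξ + ξ (j+1) := by
      unfold TNP.S
      rw [Finset.sum_Icc_succ_top (by omega : 1 ≤ j + 1)]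
    have hξj1 : 0 < ξ (j+1) := hpos (j+1) (by omega) (by omega)
    have hξj : 0 < ξ j := hpos j hj1 (by omega)
    have hQ : γ * ξ (j+1) < (γ / ↑w) * (B - TNP.S j ξ) := by
      have h1 : (γ / ↑w) * (B - TNP.S j ξ)
          = (γ / ↑w) * (B - TNP.S (j+1) ξ) + (γ / ↑w) * ξ (j+1) := by
        rw [hSsucc]; ring
      have h2 : 0 < (γ / ↑w) * ξ (j+1) := mul_pos hgw hξj1
      linarith
    have hEq := hEj j hj1 hjN
    have hX : 0 < 1 + γ * ξ j := hpos1 j (Finset.mem_Icc.2 ⟨hj1, by omega⟩)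
    have hY : 0 < 1 + γ * ξ (j+1) := hpos1 (j+1) (Finset.mem_Icc.2 ⟨by omega, by omega⟩)
    have hZ : 0 < 1 + (γ / ↑w) * (B - TNP.S j ξ) := hpos2 j (Finset.mem_Icc.2 ⟨hj1, by omega⟩)
    have hD : 0 < γ * (TNP.aa p w j - TNP.aa p w (j+1)) := by
      have h1 : ↑w * (TNP.aa p w j - TNP.aa p w (j+1)) = TNP.bb p w j := (TNP.bb_eq hw j).symm
      have h2 := hbb j
      nlinarith
    have hZY : 1 + γ * ξ (j+1) < 1 + (γ / ↑w) * (B - TNP.S j ξ) := by linarith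
    have hP : ξ (j+1) < ξ j := by
      by_contra hc
      push_neg at hc
      have hXY : 1 + γ * ξ j ≤ 1 + γ * ξ (j+1) := by nlinarith
      have l1 : TNP.aa p w j * (γ / (1 + γ * ξ (j+1))) ≤ TNP.aa p w j * (γ / (1 + γ * ξ j)) :=
        mul_le_mul_of_nonneg_left (div_le_div_of_nonneg_left hγ.le hX hXY) (haa j).le
      have l2 : TNP.aa p w j * (γ / (1 + γ * ξ (j+1)))
          - TNP.aa p w (j+1) * (γ / (1 + γ * ξ (j+1)))
          = γ * (TNP.aa p w j - TNP.aa p w (j+1)) / (1 + γ * ξ (j+1)) := by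
        field_simp
      have l3 : γ * (TNP.aa p w j - TNP.aa p w (j+1)) / (1 + (γ / ↑w) * (B - TNP.S j ξ))
          < γ * (TNP.aa p w j - TNP.aa p w (j+1)) / (1 + γ * ξ (j+1)) :=
        div_lt_div_of_pos_left hD hY hZY
      linarith
    have hYX : 1 + γ * ξ (j+1) < 1 + γ * ξ j := by nlinarith
    refine ⟨hP, ?_⟩
    have l2 : TNP.aa p w (j+1) * (γ / (1 + γ * ξ j)) < TNP.aa p w (j+1) * (γ / (1 + γ * ξ (j+1))) :=
      mul_lt_mul_of_pos_left (div_lt_div_of_pos_left hγ hY hYX) (haa (j+1))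
    have l4 : TNP.aa p w j * (γ / (1 + γ * ξ j)) - TNP.aa p w (j+1) * (γ / (1 + γ * ξ j))
        = γ * (TNP.aa p w j - TNP.aa p w (j+1)) / (1 + γ * ξ j) := by
      field_simp
    have l5 : γ * (TNP.aa p w j - TNP.aa p w (j+1)) / (1 + (γ / ↑w) * (B - TNP.S j ξ))
        < γ * (TNP.aa p w j - TNP.aa p w (j+1)) / (1 + γ * ξ j) := by linarith
    have hXZ : 1 + γ * ξ j < 1 + (γ / ↑w) * (B - TNP.S j ξ) := by
      by_contra hc
      push_neg at hc
      have := div_le_div_of_nonneg_left hD.le hZ hc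
      linarith
    linarith
  -- Backward chain
  have hRchain : ∀ m : ℕ, m ≤ N - 1 → γ * ξ (N - m) ≤ (γ / ↑w) * (B - TNP.S (N - m) ξ) := by
    intro m
    induction m with
    | zero => intro _; simpa using hRN
    | succ m ih =>
      intro hm
      have h1 : 1 ≤ N - (m+1) := by omega
      have h2 : N - (m+1) < N := by omega
      have h3 : N - (m+1) + 1 = N - m := by omega
      have := hstep (N - (m+1)) h1 h2 (by rw [h3]; exact ih (by omega))
      exact this.2
  constructor
  · intro j hj1 hjN
    have h3 : N - (N - j - 1) = j + 1 := by omega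
    have hR := hRchain (N - j - 1) (by omega)
    rw [h3] at hR
    exact (hstep j hj1 hjN hR).1
  · exact hpos
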